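/- Stride-s circular convolution (patch embedding) is not shift-equivariant, even in the general sense: for all s ≥ 2 and H, W, C ≥ 1 there exist a kernel h : Fin C × (ZMod (s·H) × ZMod (s·W)) → ℝ, an input X : ZMod (s·H) × ZMod (s·W) → EuclideanSpace ℝ (Fin C), and a shift (u,v) ∈ ZMod (s·H) × ZMod (s·W) such that for every (a,b) ∈ ZMod H × ZMod W, (shift_{(u,v)} X) ⋆_s h ≠ shift_{(a,b)} (X ⋆_s h). -/

import Mathlib

open Matrix
noncomputable section
/-- Circular shift of a 2D signal `X : ZMod M × ZMod N → α` by `(u,v)`: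
`(shift_{(u,v)} X)(i,j) = X (i-u, j-v)`. -/
def cshift2 {M N : ℕ} {α : Type*} (uv : ZMod M × ZMod N)
    (X : ZMod M × ZMod N → α) : ZMod M × ZMod N → α :=
  fun ij => X (ij.1 - uv.1, ij.2 - uv.2)
/-- The group homomorphism `ι_s : ZMod H → ZMod (s·H)`, `k ↦ s·k`. -/
def iotaS (s : ℕ) {H : ℕ} (k : ZMod H) : ZMod (s * H) :=
  (s : ZMod (s * H)) * ((k.val : ℕ) : ZMod (s * H))
/-- Stride-`s` circular convolution (patch embedding):
`(X ⋆_s h)(k,l) = ∑_{c} ∑_{(a,b)} h(c,a,b) · X(ι_s k + a, ι_s l + b) c`. -/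
def sconv (s : ℕ) {H W C : ℕ} [NeZero (s * H)] [NeZero (s * W)]
    (X : ZMod (s * H) × ZMod (s * W) → EuclideanSpace ℝ (Fin C))
    (h : Fin C × (ZMod (s * H) × ZMod (s * W)) → ℝ) : ZMod H × ZMod W → ℝ :=
  fun kl => ∑ c : Fin C, ∑ ab : ZMod (s * H) × ZMod (s * W),
    h (c, ab) * X (iotaS s kl.1 + ab.1, iotaS s kl.2 + ab.2) c

lemma key_mul (s : ℕ) {H : ℕ} [NeZero s] [NeZero H] (hs : 2 ≤ s) (k : ZMod H) :
    (s : ZMod (s * H)) * ZMod.cast k ≠ 1 := by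
  intro hk
  haveI : Fact (1 < s) := ⟨hs⟩
  have h2 : (ZMod.castHom (dvd_mul_right s H) (ZMod s))
      ((s : ZMod (s * H)) * ZMod.cast k) = 1 := by rw [hk, _root_.map_one]
  rw [RingHom.map_mul, map_natCast, ZMod.natCast_self, zero_mul] at h2
  exact zero_ne_one h2

lemma key_mul' (s : ℕ) {H : ℕ} [NeZero s] [NeZero H] (hs : 2 ≤ s) (k : ZMod H) :
    (1 : ZMod (s * H)) ≠ (s : ZMod (s * H)) * ZMod.cast k :=
  fun h => key_mul s hs k h.symm

/-- Stride-`s` circular convolution (patch embedding) is not shift-equivariant, even in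
the general sense: for `s ≥ 2` there are a kernel, an input, and a shift `(u,v)` such
that no output shift `(a,b)` satisfies
`(shift_{(u,v)} X) ⋆_s h = shift_{(a,b)} (X ⋆_s h)`. -/
theorem sconv_not_shift_equivariant
    (s H W C : ℕ) [NeZero s] [NeZero H] [NeZero W]
    (hs : 2 ≤ s) (hH : 1 ≤ H) (hW : 1 ≤ W) (hC : 1 ≤ C) :
    ∃ (h : Fin C × (ZMod (s * H) × ZMod (s * W)) → ℝ)
      (X : ZMod (s * H) × ZMod (s * W) → EuclideanSpace ℝ (Fin C))
      (uv : ZMod (s * H) × ZMod (s * W)),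
      ∀ ab : ZMod H × ZMod W,
        sconv s (cshift2 uv X) h ≠ cshift2 ab (sconv s X h) := by
  set c0 : Fin C := ⟨0, hC⟩ with hc0
  refine ⟨fun p => if p = (c0, (0, 0)) then 1 else 0,
    fun ij => (WithLp.toLp 2 (fun c => if ij = (1, 0) ∧ c = c0 then (1:ℝ) else 0) : EuclideanSpace ℝ (Fin C)),
    (-1, 0), ?_⟩
  intro ab hEq
  have h1 := congrFun hEq (0, 0)
  simp [sconv, cshift2, iotaS, Prod.ext_iff, ite_mul, mul_ite, ite_and,
    Fintype.sum_prod_type, Finset.sum_ite_eq', Finset.sum_ite_eq] at h1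
  simp only [← eq_sub_iff_add_eq'] at h1
  simp [Finset.sum_ite_eq', sub_eq_zero, key_mul s hs, key_mul' s hs] at h1
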